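/- arXiv:2012.10622 — 5 statements merged into one kernel-verified Lean document; each statement's English description precedes it below -/
import Mathlib

section
/- Let (A, q_A) and (B, q_B) be non-degenerate finite quadratic forms, D_A ⊆ A, D_B ⊆ B subgroups, and φ : D_A → D_B an isomorphism satisfying q_B(φ(x)) = -q_A(x) for all x ∈ D_A. Let Γ ⊆ A ⊕ B be the graph of φ. Then the natural projection Γ^⊥ → B (orthogonal complement with respect to the bilinear form associated to q_A ⊕ q_B) is surjective. -/
/-- ℚ/2ℤ, the value group of a finite quadratic form. -/
abbrev Q2 : Type := ℚ ⧸ AddSubgroup.zmultiples (2 : ℚ)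

/-- The polar (bilinear) form associated to a quadratic form `q`; with values in ℚ/2ℤ it is
twice the usual ℚ/ℤ-valued bilinear form `b`, and vanishes exactly when `b` does. -/
def qpolar {A : Type} [AddCommGroup A] (q : A → Q2) (x y : A) : Q2 :=
  q (x + y) - q x - q y

/-- `q` is a non-degenerate finite quadratic form on the finite abelian group `A`. -/
structure IsNondegFQF {A : Type} [AddCommGroup A] [Fintype A] (q : A → Q2) : Prop where
  hom : ∀ (n : ℤ) (a : A), q (n • a) = (n ^ 2) • q a
  bilin : ∀ a b c : A, qpolar q (a + b) c = qpolar q a c + qpolar q b c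
  nondeg : ∀ a : A, (∀ b : A, qpolar q a b = 0) → a = 0

/-! ### Auxiliary lemmas -/

lemma qpolar_comm {A : Type} [AddCommGroup A] (q : A → Q2) (x y : A) :
    qpolar q x y = qpolar q y x := by
  unfold qpolar
  rw [add_comm x y]
  abel

lemma IsNondegFQF.add_right {A : Type} [AddCommGroup A] [Fintype A] {q : A → Q2}
    (h : IsNondegFQF q) (a b c : A) :
    qpolar q a (b + c) = qpolar q a b + qpolar q a c := by
  rw [qpolar_comm, h.bilin, qpolar_comm q b a, qpolar_comm q c a]

/-- `ℚ/2ℤ` has enough roots of unity (multiplicatively). -/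
lemma q2HasEnoughRootsOfUnity (n : ℕ) [NeZero n] :
    HasEnoughRootsOfUnity (Multiplicative Q2) n := by
  have hn : 0 < n := Nat.pos_of_ne_zero (NeZero.ne n)
  haveI : Fact (0 < (2 : ℚ)) := ⟨by norm_num⟩
  set ζa : Q2 := (((2 : ℚ) / (n : ℚ)) : Q2) with hζ
  have hord : addOrderOf ζa = n := AddCircle.addOrderOf_period_div (p := (2 : ℚ)) hn
  have hgen : ∀ m : Q2, (n • m = 0) → ∃ k : ℤ, k • ζa = m := by
    intro m hm
    obtain ⟨r, rfl⟩ := QuotientAddGroup.mk_surjective m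
    have h0 : ((n • r : ℚ) : Q2) = 0 := by
      rw [← hm]; rfl
    rw [QuotientAddGroup.eq_zero_iff] at h0
    obtain ⟨k, hk⟩ := AddSubgroup.mem_zmultiples_iff.mp h0
    refine ⟨k, ?_⟩
    have hn' : (n : ℚ) ≠ 0 := Nat.cast_ne_zero.mpr hn.ne'
    have hr : k • ((2 : ℚ) / (n : ℚ)) = r := by
      rw [zsmul_eq_mul] at hk ⊢
      rw [nsmul_eq_mul] at hk
      field_simp
      linarith
    calc k • ζa = ((k • ((2 : ℚ) / (n : ℚ)) : ℚ) : Q2) := by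
          rw [hζ]
          exact (map_zsmul (QuotientAddGroup.mk' (AddSubgroup.zmultiples (2 : ℚ)))
            k ((2 : ℚ) / (n : ℚ))).symm
      _ = ((r : ℚ) : Q2) := by rw [hr]
  have hz : n • ζa = 0 := by rw [← hord]; exact addOrderOf_nsmul_eq_zero ζa
  have hζn : (Multiplicative.ofAdd ζa) ^ n = 1 := by
    rw [← ofAdd_nsmul, hz]; rfl
  refine ⟨⟨Multiplicative.ofAdd ζa, ?_⟩, ?_⟩
  · have : orderOf (Multiplicative.ofAdd ζa) = n := by
      rw [orderOf_ofAdd_eq_addOrderOf, hord]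
    exact this ▸ IsPrimitiveRoot.orderOf _
  · refine ⟨⟨⟨toUnits (Multiplicative.ofAdd ζa), ?_⟩, ?_⟩⟩
    · rw [mem_rootsOfUnity, ← map_pow, hζn, map_one]
    · rintro ⟨x, hx⟩
      rw [mem_rootsOfUnity] at hx
      have hxv : ((x : Multiplicative Q2)) ^ n = 1 := by
        have := congrArg Units.val hx
        simpa using this
      have hxadd : n • (Multiplicative.toAdd (x : Multiplicative Q2)) = 0 := by
        have := congrArg Multiplicative.toAdd hxv
        simpa [toAdd_pow] using this
      obtain ⟨k, hk⟩ := hgen _ hxadd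
      refine Subgroup.mem_zpowers_iff.mpr ⟨k, ?_⟩
      apply Subtype.ext
      apply Units.ext
      show ((toUnits (Multiplicative.ofAdd ζa) : (Multiplicative Q2)ˣ) ^ k : (Multiplicative Q2)ˣ).val
          = (x : Multiplicative Q2)
      rw [← map_zpow]
      show ((Multiplicative.ofAdd ζa) ^ k : Multiplicative Q2) = (x : Multiplicative Q2)
      rw [← ofAdd_zsmul, hk]
      simp

/-- For a finite abelian group `A`, the character group `A →+ Q2` is in bijection with `A`. -/
lemma q2CharEquivSelf (A : Type) [AddCommGroup A] [Finite A] :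
    Nonempty ((A →+ Q2) ≃ A) := by
  haveI : NeZero (Monoid.exponent (Multiplicative A)) :=
    ⟨Monoid.exponent_ne_zero_of_finite⟩
  haveI := q2HasEnoughRootsOfUnity (Monoid.exponent (Multiplicative A))
  obtain ⟨e⟩ := CommGroup.monoidHom_mulEquiv_of_hasEnoughRootsOfUnity
    (Multiplicative A) (Multiplicative Q2)
  let e1 : (A →+ Q2) ≃ (Multiplicative A →* Multiplicative Q2) :=
    AddMonoidHom.toMultiplicative
  let e2 : (Multiplicative A →* Multiplicative Q2) ≃*
      (Multiplicative A →* (Multiplicative Q2)ˣ) :=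
    MulEquiv.monoidHomCongrRight toUnits
  exact ⟨e1.trans (e2.toEquiv.trans (e.toEquiv.trans Multiplicative.toAdd))⟩

/-- Key duality lemma: every `Q2`-valued character on a subgroup of a nondegenerate finite
quadratic form space is represented by pairing with some element. -/
lemma IsNondegFQF.exists_rep {A : Type} [AddCommGroup A] [Fintype A] {q : A → Q2}
    (h : IsNondegFQF q) (D : AddSubgroup A) (L : D →+ Q2) :
    ∃ a : A, ∀ x : D, qpolar q a (x : A) = L x := by
  classical
  -- Step 1: `Q2` is divisible, hence an injective ℤ-module; extend `L` to all of `A`.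
  haveI : DivisibleBy ℚ ℕ := AddGroup.divisibleByNatOfDivisibleByInt ℚ
  haveI : DivisibleBy Q2 ℕ := QuotientAddGroup.divisibleBy _
  haveI : DivisibleBy Q2 ℤ := AddGroup.divisibleByIntOfDivisibleByNat Q2
  have hinjQ : Module.Injective ℤ Q2 := (Module.Baer.of_divisible Q2).injective
  obtain ⟨L', hL'⟩ := hinjQ.out (D.subtype.toIntLinearMap)
    (by exact fun x y hxy => Subtype.ext hxy) L.toIntLinearMap
  -- Step 2: the pairing map `A →+ (A →+ Q2)` is injective, hence bijective, hence surjective.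
  let Φ : A →+ (A →+ Q2) :=
    AddMonoidHom.mk' (fun a => AddMonoidHom.mk' (fun x => qpolar q a x) (h.add_right a))
      (fun a b => by ext c; exact h.bilin a b c)
  have hΦinj : Function.Injective Φ := by
    rw [injective_iff_map_eq_zero]
    intro a ha
    refine h.nondeg a fun b => ?_
    have := congrArg (fun f => f b) ha
    simpa [Φ] using this
  obtain ⟨E⟩ := q2CharEquivSelf A
  have hΦsurj : Function.Surjective Φ := by
    have hcomp : Function.Injective (E ∘ Φ) := E.injective.comp hΦinj
    have hbij : Function.Bijective (E ∘ Φ) := Finite.injective_iff_bijective.mp hcomp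
    intro f
    obtain ⟨a, ha⟩ := hbij.2 (E f)
    exact ⟨a, E.injective ha⟩
  obtain ⟨a, ha⟩ := hΦsurj L'.toAddMonoidHom
  refine ⟨a, fun x => ?_⟩
  have h1 : qpolar q a (x : A) = L' (x : A) := by
    have := congrArg (fun f => f (x : A)) ha
    simpa [Φ] using this
  rw [h1]
  exact hL' x

/-- if `φ : D_A ≃ D_B` is an anti-isometry between subgroups of the
non-degenerate finite quadratic forms `(A, q_A)` and `(B, q_B)`, and `Γ ⊆ A ⊕ B` is its graph,
then the projection `Γ^⊥ → B` is surjective: for every `b : B` there is `a : A`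
with `(a, b)` orthogonal (for the bilinear form of `q_A ⊕ q_B`) to every `(x, φ x)`. -/
theorem statement0 {A B : Type} [AddCommGroup A] [Fintype A] [AddCommGroup B] [Fintype B]
    (qA : A → Q2) (qB : B → Q2) (hA : IsNondegFQF qA) (hB : IsNondegFQF qB)
    (DA : AddSubgroup A) (DB : AddSubgroup B) (φ : DA ≃+ DB)
    (hφ : ∀ x : DA, qB ((φ x : B)) = - qA ((x : A))) :
    ∀ b : B, ∃ a : A,
      ∀ x : DA, qpolar (fun p : A × B => qA p.1 + qB p.2) (a, b) ((x : A), (φ x : B)) = 0 := by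
  intro b
  let L : DA →+ Q2 :=
    AddMonoidHom.mk' (fun x : DA => - qpolar qB b ((φ x : B))) (by
      intro x y
      have h1 : ((φ (x + y) : DB) : B) = (φ x : B) + (φ y : B) := by
        rw [map_add]; rfl
      show - qpolar qB b ((φ (x + y) : B)) =
        - qpolar qB b ((φ x : B)) + - qpolar qB b ((φ y : B))
      rw [h1, hB.add_right, neg_add])
  obtain ⟨a, ha⟩ := hA.exists_rep DA L
  refine ⟨a, fun x => ?_⟩
  have hsplit : qpolar (fun p : A × B => qA p.1 + qB p.2) (a, b) ((x : A), (φ x : B))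
      = qpolar qA a (x : A) + qpolar qB b ((φ x : B)) := by
    simp only [qpolar, Prod.fst_add, Prod.snd_add]
    abel
  rw [hsplit, ha x]
  show - qpolar qB b ((φ x : B)) + qpolar qB b ((φ x : B)) = 0
  exact neg_add_cancel _
end

section
/- Let R̃ be an irreducible ADE root lattice and g ∈ O(R̃) an isometry that acts trivially on R̃/2R̃ (equivalently, g(v) ≡ v mod 2R̃ for all v ∈ R̃). If the positive roots of R̃ inject into R̃/2R̃, then g = 1 or g = -1. -/
/-- let `L` be an irreducible ADE root lattice (even, negative definite,
generated by its roots, not an orthogonal direct sum of two nonzero sublattices) and let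
`g` be an isometry of `L` acting trivially on `L/2L`.  If (any two) roots congruent mod `2L`
are equal or opposite (i.e. the positive roots inject into `L/2L`), then `g = 1` or
`g = -1` on `L`. -/
theorem statement6 {V : Type} [AddCommGroup V] [Module ℚ V]
    (B : V →ₗ[ℚ] V →ₗ[ℚ] ℚ) (hsymm : ∀ x y : V, B x y = B y x)
    (L : Submodule ℤ V)
    (heven : ∀ v ∈ L, ∃ n : ℤ, B v v = 2 * n)
    (hnegdef : ∀ v ∈ L, v ≠ 0 → B v v < 0)
    (hroots : Submodule.span ℤ {v : V | v ∈ L ∧ B v v = -2} = L)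
    (hirr : ¬ ∃ L₁ L₂ : Submodule ℤ V, L₁ ≠ ⊥ ∧ L₂ ≠ ⊥ ∧ L₁ ≤ L ∧ L₂ ≤ L ∧
      (∀ x ∈ L₁, ∀ y ∈ L₂, B x y = 0) ∧ L₁ ⊔ L₂ = L)
    (g : V ≃ₗ[ℚ] V)
    (hgB : ∀ x y : V, B (g x) (g y) = B x y)
    (hgL : ∀ x : V, x ∈ L ↔ g x ∈ L)
    (hgtriv : ∀ v ∈ L, ∃ w ∈ L, g v - v = (2 : ℤ) • w)
    (hinj : ∀ r r' : V, (r ∈ L ∧ B r r = -2) → (r' ∈ L ∧ B r' r' = -2) →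
      (∃ w ∈ L, r - r' = (2 : ℤ) • w) → (r = r' ∨ r = -r')) :
    (∀ v ∈ L, g v = v) ∨ (∀ v ∈ L, g v = -v) := by
  classical
  set R : Set V := {v : V | v ∈ L ∧ B v v = -2} with hRdef
  have hroot_sign : ∀ r ∈ R, g r = r ∨ g r = -r := by
    intro r hr
    have hrL : r ∈ L := hr.1
    have hgrL : g r ∈ L := (hgL r).mp hrL
    have hgr2 : B (g r) (g r) = -2 := by rw [hgB]; exact hr.2
    rcases hgtriv r hrL with ⟨w, hw, hww⟩
    exact hinj (g r) r ⟨hgrL, hgr2⟩ hr ⟨w, hw, hww⟩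
  set Sp : Set V := {r | r ∈ R ∧ g r = r} with hSp
  set Sm : Set V := {r | r ∈ R ∧ g r = -r} with hSm
  have hRunion : R = Sp ∪ Sm := by
    ext r
    constructor
    · intro hr
      rcases hroot_sign r hr with h | h
      · exact Or.inl ⟨hr, h⟩
      · exact Or.inr ⟨hr, h⟩
    · rintro (h | h) <;> exact h.1
  set Pp := Submodule.span ℤ Sp with hPp
  set Pm := Submodule.span ℤ Sm with hPm
  have hsup : Pp ⊔ Pm = L := by
    rw [hPp, hPm, ← Submodule.span_union, ← hRunion]; exact hroots
  have hlep : Pp ≤ L := by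
    rw [← hroots]; exact Submodule.span_mono (fun x hx => hx.1)
  have hlem : Pm ≤ L := by
    rw [← hroots]; exact Submodule.span_mono (fun x hx => hx.1)
  have horth0 : ∀ r ∈ Sp, ∀ s ∈ Sm, B r s = 0 := by
    intro r hr s hs
    have h1 : B r s = - B r s := by
      conv_lhs => rw [← hgB r s]
      rw [hr.2, hs.2]; simp
    linarith
  have horth1 : ∀ r ∈ Sp, ∀ y ∈ Pm, B r y = 0 := by
    intro r hr y hy
    induction hy using Submodule.span_induction with
    | mem s hs => exact horth0 r hr s hs
    | zero => simp
    | add a b _ _ ha hb => rw [map_add, ha, hb]; ring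
    | smul n a _ ha => rw [map_zsmul, ha]; simp
  have horth : ∀ x ∈ Pp, ∀ y ∈ Pm, B x y = 0 := by
    intro x hx y hy
    induction hx using Submodule.span_induction with
    | mem r hr => exact horth1 r hr y hy
    | zero => simp
    | add a b _ _ ha hb => rw [map_add, LinearMap.add_apply, ha, hb]; ring
    | smul n a _ ha => rw [map_zsmul, LinearMap.smul_apply, ha]; simp
  have hroot_ne : ∀ r ∈ R, r ≠ 0 := by
    intro r hr h0
    have h2 := hr.2
    rw [h0] at h2
    simp at h2
  have key : Pp = ⊥ ∨ Pm = ⊥ := by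
    by_contra h
    push_neg at h
    exact hirr ⟨Pp, Pm, h.1, h.2, hlep, hlem, horth, hsup⟩
  rcases key with hb | hb
  · -- all roots negated
    right
    intro v hv
    rw [← hroots] at hv
    have hall : ∀ r ∈ R, g r = -r := by
      intro r hr
      rcases hroot_sign r hr with h | h
      · exfalso
        have : r ∈ Pp := Submodule.subset_span ⟨hr, h⟩
        rw [hb] at this
        exact hroot_ne r hr (by simpa using this)
      · exact h
    induction hv using Submodule.span_induction with
    | mem r hr => exact hall r hr
    | zero => simp
    | add a b _ _ ha hb => rw [map_add, ha, hb]; abel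
    | smul n a _ ha => rw [map_zsmul, ha]; simp
  · left
    intro v hv
    rw [← hroots] at hv
    have hall : ∀ r ∈ R, g r = r := by
      intro r hr
      rcases hroot_sign r hr with h | h
      · exact h
      · exfalso
        have : r ∈ Pm := Submodule.subset_span ⟨hr, h⟩
        rw [hb] at this
        exact hroot_ne r hr (by simpa using this)
    induction hv using Submodule.span_induction with
    | mem r hr => exact hall r hr
    | zero => simp
    | add a b _ _ ha hb => rw [map_add, ha, hb]
    | smul n a _ ha => rw [map_zsmul, ha]
end

section
/- Let R̃ = ⊕_{j∈J} R̃_j be an ADE root lattice with irreducible components R̃_j, and consider the natural homomorphism ψ : O(R̃) → O((1/2)R̃^∨/R̃), where (1/2)R̃^∨/R̃ is the discriminant group of the rescaled lattice R̃(2). Then the kernel of ψ consists precisely of the isometries ⊕_j g_j with g_j = ±1 on R̃_j when R̃_j is unimodular, and g_j = 1 on R̃_j otherwise. -/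
section ADE

variable {V : Type} [AddCommGroup V] [Module ℚ V]

/-- A root of a lattice `L`: a vector of `L` of square `-2`. -/
def IsRootOf (B : V →ₗ[ℚ] V →ₗ[ℚ] ℚ) (L : Submodule ℤ V) (r : V) : Prop :=
  r ∈ L ∧ B r r = -2

/-- An ADE-lattice: an integral even negative definite lattice generated by its roots. -/
def IsADELattice (B : V →ₗ[ℚ] V →ₗ[ℚ] ℚ) (L : Submodule ℤ V) : Prop :=
  (∀ v ∈ L, ∀ w ∈ L, ∃ m : ℤ, B v w = m) ∧
  (∀ v ∈ L, ∃ n : ℤ, B v v = 2 * n) ∧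
  (∀ v ∈ L, v ≠ 0 → B v v < 0) ∧
  Submodule.span ℤ {r : V | IsRootOf B L r} = L

/-- Irreducibility of the lattice. -/
def IsIrreducibleLattice (B : V →ₗ[ℚ] V →ₗ[ℚ] ℚ) (L : Submodule ℤ V) : Prop :=
  L ≠ ⊥ ∧ ¬ ∃ L₁ L₂ : Submodule ℤ V, L₁ ≠ ⊥ ∧ L₂ ≠ ⊥ ∧ L₁ ≤ L ∧ L₂ ≤ L ∧
    (∀ x ∈ L₁, ∀ y ∈ L₂, B x y = 0) ∧ L₁ ⊔ L₂ = L

end ADE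

/-- let `R̃ = ⊕_j R̃_j` be an ADE root lattice with irreducible components
`R̃_j` (here `L = ⨆ j, Lc j` spanning `V`).  An isometry `g` of `R̃` lies in the kernel of
`ψ : O(R̃) → O((1/2)R̃^∨/R̃)` (the discriminant of `R̃(2)`: `g x - x ∈ L` whenever
`2⟨x, v⟩ ∈ ℤ` for all `v ∈ L`) if and only if on each component `R̃_j` it is the identity,
or minus the identity with `R̃_j` unimodular. -/
theorem statement12 {V : Type} [AddCommGroup V] [Module ℚ V] [FiniteDimensional ℚ V]
    (B : V →ₗ[ℚ] V →ₗ[ℚ] ℚ) (hsymm : ∀ x y : V, B x y = B y x)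
    (J : Type) [Fintype J] (Lc : J → Submodule ℤ V)
    (hcADE : ∀ j, IsADELattice B (Lc j) ∧ IsIrreducibleLattice B (Lc j))
    (horth : ∀ j k, j ≠ k → ∀ x ∈ Lc j, ∀ y ∈ Lc k, B x y = 0)
    (L : Submodule ℤ V) (hsum : (⨆ j, Lc j) = L)
    (hspan : Submodule.span ℚ (L : Set V) = ⊤)
    (g : V ≃ₗ[ℚ] V)
    (hgB : ∀ x y : V, B (g x) (g y) = B x y)
    (hgL : ∀ x : V, x ∈ L ↔ g x ∈ L) :
    ((∀ x : V, (∀ v ∈ L, ∃ m : ℤ, 2 * B x v = m) → g x - x ∈ L) ↔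
      (∀ j, (∀ v ∈ Lc j, g v = v) ∨
        ((∀ x ∈ Submodule.span ℚ ((Lc j : Set V)),
            (∀ v ∈ Lc j, ∃ m : ℤ, B x v = m) → x ∈ Lc j) ∧
          ∀ v ∈ Lc j, g v = -v))) := by
  classical
  set P : J → Submodule ℚ V := fun j => Submodule.span ℚ ((Lc j : Set V)) with hP
  have hcle : ∀ j, Lc j ≤ L := fun j => hsum ▸ le_iSup Lc j
  -- decomposition of lattice elements
  have hdec : ∀ v ∈ L, ∃ f : J → V, (∀ j, f j ∈ Lc j) ∧ v = ∑ j, f j := by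
    intro v hv
    rw [← hsum, Submodule.mem_iSup_iff_exists_finsupp] at hv
    obtain ⟨f, hf, hfs⟩ := hv
    refine ⟨f, hf, ?_⟩
    rw [← hfs, Finsupp.sum_fintype]
    intro _; rfl
  -- orthogonality extended to rational spans
  have horthQ : ∀ j k, j ≠ k → ∀ x ∈ P j, ∀ y ∈ P k, B x y = 0 := by
    intro j k hjk x hx y hy
    have h1 : ∀ z ∈ Lc k, B x z = 0 := by
      intro z hz
      have hsub : (Lc j : Set V) ⊆ ↑(LinearMap.ker (B.flip z)) := by
        intro w hw
        simpa using horth j k hjk w hw z hz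
      simpa using Submodule.span_le.mpr hsub hx
    have hsub : (Lc k : Set V) ⊆ ↑(LinearMap.ker (B x)) := by
      intro z hz; simpa using h1 z hz
    simpa using Submodule.span_le.mpr hsub hy
  -- sum kills the other components
  have hsingle : ∀ (f : J → V), (∀ j, f j ∈ Lc j) → ∀ k, ∀ y ∈ Lc k,
      B (∑ l, f l) y = B (f k) y := by
    intro f hf k y hy
    have e1 : B (∑ l, f l) = ∑ l, B (f l) := map_sum B f Finset.univ
    rw [e1, LinearMap.sum_apply]
    exact Finset.sum_eq_single_of_mem k (Finset.mem_univ k)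
      fun l _ hlk => horth l k hlk _ (hf l) _ hy
  -- diagonal formula
  have hdiag : ∀ f f' : J → V, (∀ j, f j ∈ Lc j) → (∀ j, f' j ∈ Lc j) →
      B (∑ j, f j) (∑ k, f' k) = ∑ j, B (f j) (f' j) := by
    intro f f' hf hf'
    have e1 : B (∑ j, f j) = ∑ j, B (f j) := map_sum B f Finset.univ
    rw [e1, LinearMap.sum_apply]
    refine Finset.sum_congr rfl fun j _ => ?_
    rw [map_sum]
    exact Finset.sum_eq_single_of_mem j (Finset.mem_univ j)
      fun k _ hk => horth j k (Ne.symm hk) _ (hf j) _ (hf' k)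
  -- integrality of B on L
  have hInt : ∀ v ∈ L, ∀ w ∈ L, ∃ m : ℤ, B v w = m := by
    intro v hv w hw
    obtain ⟨f, hf, rfl⟩ := hdec v hv
    obtain ⟨f', hf', rfl⟩ := hdec w hw
    have hm : ∀ j, ∃ m : ℤ, B (f j) (f' j) = m := fun j =>
      (hcADE j).1.1 _ (hf j) _ (hf' j)
    choose m hm using hm
    refine ⟨∑ j, m j, ?_⟩
    rw [hdiag f f' hf hf']
    push_cast
    exact Finset.sum_congr rfl fun j _ => hm j
  -- evenness of B on L
  have hEven : ∀ v ∈ L, ∃ n : ℤ, B v v = 2 * n := by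
    intro v hv
    obtain ⟨f, hf, rfl⟩ := hdec v hv
    have hn : ∀ j, ∃ n : ℤ, B (f j) (f j) = 2 * n := fun j =>
      (hcADE j).1.2.1 _ (hf j)
    choose n hn using hn
    refine ⟨∑ j, n j, ?_⟩
    rw [hdiag f f hf hf]
    push_cast
    rw [Finset.mul_sum]
    exact Finset.sum_congr rfl fun j _ => hn j
  -- negative definiteness on L
  have hNeg : ∀ v ∈ L, v ≠ 0 → B v v < 0 := by
    intro v hv hv0
    obtain ⟨f, hf, rfl⟩ := hdec v hv
    rw [hdiag f f hf hf]
    have hj0 : ∃ j, f j ≠ 0 := by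
      by_contra h
      push_neg at h
      exact hv0 (Finset.sum_eq_zero fun j _ => h j)
    obtain ⟨j0, hj0⟩ := hj0
    calc ∑ j, B (f j) (f j) < ∑ _j : J, (0 : ℚ) := by
          refine Finset.sum_lt_sum (fun j _ => ?_) ⟨j0, Finset.mem_univ j0, ?_⟩
          · by_cases h : f j = 0
            · simp [h]
            · exact le_of_lt ((hcADE j).1.2.2.1 _ (hf j) h)
          · exact (hcADE j0).1.2.2.1 _ (hf j0) hj0
      _ = 0 := by simp
  -- L ∩ P j = Lc j
  have hLP : ∀ j, ∀ w ∈ L, w ∈ P j → w ∈ Lc j := by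
    intro j w hw hwP
    obtain ⟨f, hf, rfl⟩ := hdec w hw
    have hk0 : ∀ k, k ≠ j → f k = 0 := by
      intro k hkj
      by_contra h0
      have hlt := (hcADE k).1.2.2.1 (f k) (hf k) h0
      have heq : B (∑ l, f l) (f k) = B (f k) (f k) := hsingle f hf k (f k) (hf k)
      have h0' : B (∑ l, f l) (f k) = 0 :=
        horthQ j k (Ne.symm hkj) _ hwP _ (Submodule.subset_span (hf k))
      rw [heq] at h0'
      linarith
    have : ∑ l, f l = f j :=
      Finset.sum_eq_single_of_mem j (Finset.mem_univ j) fun l _ hlj => hk0 l hlj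
    rw [this]
    exact hf j
  -- decomposition of arbitrary vectors along rational spans
  have hVdec : ∀ x : V, ∃ f : J → V, (∀ j, f j ∈ P j) ∧ x = ∑ j, f j := by
    have htop : (⨆ j, P j) = ⊤ := by
      refine le_antisymm le_top ?_
      rw [← hspan]
      refine Submodule.span_le.mpr ?_
      intro v hv
      obtain ⟨f, hf, rfl⟩ := hdec v hv
      exact Submodule.sum_mem _ fun j _ =>
        Submodule.mem_iSup_of_mem j (Submodule.subset_span (hf j))
    intro x
    have hx : x ∈ ⨆ j, P j := htop ▸ Submodule.mem_top
    rw [Submodule.mem_iSup_iff_exists_finsupp] at hx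
    obtain ⟨f, hf, hfs⟩ := hx
    refine ⟨f, hf, ?_⟩
    rw [← hfs, Finsupp.sum_fintype]
    intro _; rfl
  -- extension of g = ±1 from lattices to rational spans
  have hext1 : ∀ j, (∀ v ∈ Lc j, g v = v) → ∀ x ∈ P j, g x = x := by
    intro j h1 x hx
    have hsub : (Lc j : Set V) ⊆
        ↑(LinearMap.ker ((g : V →ₗ[ℚ] V) - LinearMap.id)) := by
      intro v hv
      simp [LinearMap.mem_ker, sub_eq_zero, h1 v hv]
    have h2 := Submodule.span_le.mpr hsub hx
    simp only [SetLike.mem_coe, LinearMap.mem_ker, LinearMap.sub_apply,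
      LinearMap.id_apply, LinearEquiv.coe_coe, sub_eq_zero] at h2
    exact h2
  have hextm1 : ∀ j, (∀ v ∈ Lc j, g v = -v) → ∀ x ∈ P j, g x = -x := by
    intro j h1 x hx
    have hsub : (Lc j : Set V) ⊆
        ↑(LinearMap.ker ((g : V →ₗ[ℚ] V) + LinearMap.id)) := by
      intro v hv
      simp [LinearMap.mem_ker, h1 v hv]
    have h2 := Submodule.span_le.mpr hsub hx
    simp only [SetLike.mem_coe, LinearMap.mem_ker, LinearMap.add_apply,
      LinearMap.id_apply, LinearEquiv.coe_coe] at h2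
    exact eq_neg_of_add_eq_zero_left h2
  constructor
  · intro hker j
    -- Step A : every root of L goes to ± itself
    have stepA : ∀ r : V, r ∈ L → B r r = -2 → g r = r ∨ g r = -r := by
      intro r hr hrr
      have hwL : g ((2:ℚ)⁻¹ • r) - (2:ℚ)⁻¹ • r ∈ L := by
        apply hker
        intro v hv
        obtain ⟨m, hm⟩ := hInt r hr v hv
        refine ⟨m, ?_⟩
        rw [map_smul, LinearMap.smul_apply, smul_eq_mul, hm]
        ring
      set w : V := g ((2:ℚ)⁻¹ • r) - (2:ℚ)⁻¹ • r with hw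
      have h2w : (2:ℚ) • w = g r - r := by
        rw [hw, map_smul]
        module
      have hgr : g r = r + (2:ℚ) • w := by rw [h2w]; abel
      have hsL : g r ∈ L := (hgL r).mp hr
      have hss : B (g r) (g r) = -2 := by rw [hgB]; exact hrr
      obtain ⟨m, hm⟩ := hInt r hr w hwL
      have hbs : B r (g r) = -2 + 2 * m := by
        rw [hgr, map_add, map_smul, smul_eq_mul, hm, hrr]
      have h1 : B (r + g r) (r + g r) ≤ 0 := by
        by_cases h : r + g r = 0
        · rw [h]; simp
        · exact le_of_lt (hNeg _ (add_mem hr hsL) h)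
      have h2 : B (r - g r) (r - g r) ≤ 0 := by
        by_cases h : r - g r = 0
        · rw [h]; simp
        · exact le_of_lt (hNeg _ (sub_mem hr hsL) h)
      have hrs : B (g r) r = B r (g r) := hsymm (g r) r
      have hplus : B (r + g r) (r + g r) = -4 + 2 * (-2 + 2 * m) := by
        simp only [map_add, LinearMap.add_apply]
        rw [hrs, hbs, hrr, hss]
        ring
      have hminus : B (r - g r) (r - g r) = -4 - 2 * (-2 + 2 * m) := by
        simp only [map_sub, LinearMap.sub_apply]
        rw [hrs, hbs, hrr, hss]
        ring
      have hm2 : (m : ℚ) ≤ 2 := by rw [hplus] at h1; linarith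
      have hm0 : (0 : ℚ) ≤ m := by rw [hminus] at h2; linarith
      have hm2' : m ≤ 2 := by exact_mod_cast hm2
      have hm0' : 0 ≤ m := by exact_mod_cast hm0
      interval_cases m
      · -- m = 0 : g r = r
        left
        have h0 : B (r - g r) (r - g r) = 0 := by rw [hminus]; norm_num
        have hr0 : r - g r = 0 := by
          by_contra h
          exact absurd h0 (ne_of_lt (hNeg _ (sub_mem hr hsL) h))
        exact (sub_eq_zero.mp hr0).symm
      · -- m = 1 : contradiction with evenness
        exfalso
        have hrw : r + g r = (2:ℚ) • (r + w) := by
          rw [hgr]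
          module
        have hv4 : B (r + g r) (r + g r) = 4 * B (r + w) (r + w) := by
          rw [hrw]
          simp only [map_smul, LinearMap.smul_apply, smul_eq_mul]
          ring
        obtain ⟨n, hn⟩ := hEven (r + w) (add_mem hr hwL)
        rw [hplus, hn] at hv4
        have hq : (2 * n : ℚ) = -1 := by push_cast at hv4 ⊢; linarith
        have hz : (2 * n : ℤ) = -1 := by exact_mod_cast hq
        omega
      · -- m = 2 : g r = -r
        right
        have h0 : B (r + g r) (r + g r) = 0 := by rw [hplus]; norm_num
        have hr0 : r + g r = 0 := by
          by_contra h
          exact absurd h0 (ne_of_lt (hNeg _ (add_mem hr hsL) h))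
        exact eq_neg_of_add_eq_zero_right hr0
    -- roots of the component are roots of L
    have hrootL : ∀ r : V, IsRootOf B (Lc j) r → g r = r ∨ g r = -r := by
      intro r hr
      exact stepA r (hcle j hr.1) hr.2
    have hroot0 : ∀ r : V, IsRootOf B (Lc j) r → r ≠ 0 := by
      intro r hr h0
      have h2 := hr.2
      rw [h0] at h2
      simp at h2
    -- Step B : constant sign on the component
    have stepB : (∀ r, IsRootOf B (Lc j) r → g r = r) ∨
        (∀ r, IsRootOf B (Lc j) r → g r = -r) := by
      by_contra h
      push_neg at h
      obtain ⟨⟨r₁, hr₁, hgr₁⟩, ⟨r₂, hr₂, hgr₂⟩⟩ := h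
      have hgr₁' : g r₁ = -r₁ := (hrootL r₁ hr₁).resolve_left hgr₁
      have hgr₂' : g r₂ = r₂ := (hrootL r₂ hr₂).resolve_right hgr₂
      set Sp : Set V := {r | IsRootOf B (Lc j) r ∧ g r = r} with hSp
      set Sm : Set V := {r | IsRootOf B (Lc j) r ∧ g r = -r} with hSm
      have hSunion : Sp ∪ Sm = {r : V | IsRootOf B (Lc j) r} := by
        ext r
        constructor
        · rintro (⟨h, -⟩ | ⟨h, -⟩) <;> exact h
        · intro h
          rcases hrootL r h with h1 | h1
          · exact Or.inl ⟨h, h1⟩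
          · exact Or.inr ⟨h, h1⟩
      have hgen : ∀ x ∈ Sp, ∀ y ∈ Sm, B x y = 0 := by
        rintro x ⟨-, hx⟩ y ⟨-, hy⟩
        have hb := hgB x y
        rw [hx, hy, map_neg] at hb
        linarith
      have horthspan : ∀ x ∈ Submodule.span ℤ Sp, ∀ y ∈ Submodule.span ℤ Sm,
          B x y = 0 := by
        intro x hx y hy
        have h1 : ∀ z ∈ Sm, B x z = 0 := by
          intro z hz
          have hsub : Sp ⊆ ↑((LinearMap.ker (B.flip z)).restrictScalars ℤ) := by
            intro u hu
            simpa using hgen u hu z hz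
          simpa using Submodule.span_le.mpr hsub hx
        have hsub : Sm ⊆ ↑((LinearMap.ker (B x)).restrictScalars ℤ) := by
          intro z hz; simpa using h1 z hz
        simpa using Submodule.span_le.mpr hsub hy
      refine (hcADE j).2.2 ⟨Submodule.span ℤ Sp, Submodule.span ℤ Sm, ?_, ?_, ?_, ?_,
        horthspan, ?_⟩
      · rw [Submodule.ne_bot_iff]
        exact ⟨r₂, Submodule.subset_span ⟨hr₂, hgr₂'⟩, hroot0 r₂ hr₂⟩
      · rw [Submodule.ne_bot_iff]
        exact ⟨r₁, Submodule.subset_span ⟨hr₁, hgr₁'⟩, hroot0 r₁ hr₁⟩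
      · refine Submodule.span_le.mpr ?_
        rintro r ⟨hr, -⟩
        exact hr.1
      · refine Submodule.span_le.mpr ?_
        rintro r ⟨hr, -⟩
        exact hr.1
      · rw [← Submodule.span_union, hSunion]
        exact (hcADE j).1.2.2.2
    rcases stepB with hpos | hneg
    · left
      intro v hv
      have hv' : v ∈ Submodule.span ℤ {r : V | IsRootOf B (Lc j) r} := by
        rw [(hcADE j).1.2.2.2]; exact hv
      have hsub : {r : V | IsRootOf B (Lc j) r} ⊆
          ↑((LinearMap.ker ((g : V →ₗ[ℚ] V) - LinearMap.id)).restrictScalars ℤ) := by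
        intro r hr
        simp [LinearMap.mem_ker, sub_eq_zero, hpos r hr]
      have h2 := Submodule.span_le.mpr hsub hv'
      simp only [SetLike.mem_coe, Submodule.restrictScalars_mem, LinearMap.mem_ker,
        LinearMap.sub_apply, LinearMap.id_apply, LinearEquiv.coe_coe, sub_eq_zero] at h2
      exact h2
    · right
      have hnegall : ∀ v ∈ Lc j, g v = -v := by
        intro v hv
        have hv' : v ∈ Submodule.span ℤ {r : V | IsRootOf B (Lc j) r} := by
          rw [(hcADE j).1.2.2.2]; exact hv
        have hsub : {r : V | IsRootOf B (Lc j) r} ⊆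
            ↑((LinearMap.ker ((g : V →ₗ[ℚ] V) + LinearMap.id)).restrictScalars ℤ) := by
          intro r hr
          simp [LinearMap.mem_ker, hneg r hr]
        have h2 := Submodule.span_le.mpr hsub hv'
        simp only [SetLike.mem_coe, Submodule.restrictScalars_mem, LinearMap.mem_ker,
          LinearMap.add_apply, LinearMap.id_apply, LinearEquiv.coe_coe] at h2
        exact eq_neg_of_add_eq_zero_left h2
      refine ⟨?_, hnegall⟩
      intro x hx hxint
      have hk : g ((2:ℚ)⁻¹ • x) - (2:ℚ)⁻¹ • x ∈ L := by
        apply hker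
        intro v hv
        obtain ⟨f, hf, rfl⟩ := hdec v hv
        have hxv : B x (∑ k, f k) = B x (f j) := by
          rw [map_sum]
          exact Finset.sum_eq_single_of_mem j (Finset.mem_univ j)
            fun k _ hkj => horthQ j k (Ne.symm hkj) x hx (f k)
              (Submodule.subset_span (hf k))
        obtain ⟨m, hm⟩ := hxint (f j) (hf j)
        refine ⟨m, ?_⟩
        rw [map_smul, LinearMap.smul_apply, smul_eq_mul, hxv, hm]
        ring
      have hgx : g ((2:ℚ)⁻¹ • x) = (2:ℚ)⁻¹ • (-x) := by
        rw [map_smul, hextm1 j hnegall x hx]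
      rw [hgx] at hk
      have heq : (2:ℚ)⁻¹ • (-x) - (2:ℚ)⁻¹ • x = -x := by module
      rw [heq] at hk
      have hxL := neg_mem hk
      rw [neg_neg] at hxL
      exact hLP j x hxL hx
  · intro hcomp x hx
    obtain ⟨f, hf, rfl⟩ := hVdec x
    have hterm : ∀ j, g (f j) - f j ∈ L := by
      intro j
      rcases hcomp j with h1 | ⟨huni, hm1⟩
      · rw [hext1 j h1 (f j) (hf j)]
        simp
      · have hgf : g (f j) = -(f j) := hextm1 j hm1 (f j) (hf j)
        have h2 : (2:ℚ) • f j ∈ Lc j := by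
          apply huni
          · exact Submodule.smul_mem _ _ (hf j)
          · intro v hv
            obtain ⟨m, hm⟩ := hx v (hcle j hv)
            have hxv : B (∑ k, f k) v = B (f j) v := by
              have e1 : B (∑ k, f k) = ∑ k, B (f k) := map_sum B f Finset.univ
              rw [e1, LinearMap.sum_apply]
              exact Finset.sum_eq_single_of_mem j (Finset.mem_univ j)
                fun k _ hkj => horthQ k j hkj (f k) (hf k) v
                  (Submodule.subset_span hv)
            rw [hxv] at hm
            refine ⟨m, ?_⟩
            rw [map_smul, LinearMap.smul_apply, smul_eq_mul, ← hm]
        have heq : g (f j) - f j = -((2:ℚ) • f j) := by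
          rw [hgf]
          module
        rw [heq]
        exact neg_mem (hcle j h2)
    have hsplit : g (∑ j, f j) - ∑ j, f j = ∑ j, (g (f j) - f j) := by
      rw [map_sum, Finset.sum_sub_distrib]
    rw [hsplit]
    exact Submodule.sum_mem _ fun j _ => hterm j
end

section
/- Let R ⊆ L₁₀ be an ADE-sublattice of the even unimodular hyperbolic lattice L₁₀ of rank 10, with inclusion ι_R. Let M_R be the ℤ-submodule of (L₁₀(2) ⊕ R(2)) ⊗ ℚ generated by L₁₀(2) and the vectors (ι_R(v), v)/2 for v ∈ R, with the extended bilinear form. Then M_R is an even lattice; in particular, for v ∈ R with ⟨v,v⟩ = -2 the vector (ι_R(v), v)/2 has square -2 in M_R. -/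
/-- let `L₁₀` (here `L`, an even unimodular hyperbolic lattice of rank 10,
spanning `V`) contain an ADE-sublattice `R`.  Let `M_R ⊆ (L₁₀(2) ⊕ R(2)) ⊗ ℚ` (here inside
`V × V` with the doubled form `⟨(x₁,x₂),(y₁,y₂)⟩ = 2⟨x₁,y₁⟩ + 2⟨x₂,y₂⟩`) be generated by
`L₁₀(2)` and the vectors `(ι_R v, v)/2`, `v ∈ R`.  Then `M_R` is an even lattice; in
particular for `v ∈ R` with `⟨v,v⟩ = -2` the vector `(ι_R v, v)/2` has square `-2`. -/
theorem statement14 {V : Type} [AddCommGroup V] [Module ℚ V] [FiniteDimensional ℚ V]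
    (B : V →ₗ[ℚ] V →ₗ[ℚ] ℚ) (hsymm : ∀ x y : V, B x y = B y x)
    (L : Submodule ℤ V)
    (hint : ∀ v ∈ L, ∀ w ∈ L, ∃ m : ℤ, B v w = m)
    (heven : ∀ v ∈ L, ∃ n : ℤ, B v v = 2 * n)
    (hspan : Submodule.span ℚ (L : Set V) = ⊤)
    (hrank : Module.finrank ℚ V = 10)
    (hunimod : ∀ x : V, (∀ v ∈ L, ∃ m : ℤ, B x v = m) → x ∈ L)
    (hhyperbolic : ∃ x : V, 0 < B x x ∧ ∀ y : V, B x y = 0 → y ≠ 0 → B y y < 0)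
    (R : Submodule ℤ V) (hRL : R ≤ L)
    (hRroots : Submodule.span ℤ {r : V | r ∈ R ∧ B r r = -2} = R)
    (hRneg : ∀ v ∈ R, v ≠ 0 → B v v < 0) :
    (∀ z ∈ Submodule.span ℤ
        ((fun x : V => (x, (0 : V))) '' L ∪
          (fun v : V => ((2⁻¹ : ℚ) • v, (2⁻¹ : ℚ) • v)) '' R),
      ∃ n : ℤ, 2 * B z.1 z.1 + 2 * B z.2 z.2 = 2 * n) ∧
    (∀ v ∈ R, B v v = -2 →
      2 * B ((2⁻¹ : ℚ) • v) ((2⁻¹ : ℚ) • v) + 2 * B ((2⁻¹ : ℚ) • v) ((2⁻¹ : ℚ) • v) = -2) := by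
  constructor
  · set S : Set (V × V) :=
      ((fun x : V => (x, (0 : V))) '' L ∪
        (fun v : V => ((2⁻¹ : ℚ) • v, (2⁻¹ : ℚ) • v)) '' R) with hS
    -- pairing integrality on generators
    have hgen : ∀ z ∈ S, ∀ w ∈ S, ∃ m : ℤ, 2 * B z.1 w.1 + 2 * B z.2 w.2 = m := by
      rintro z (⟨x, hx, rfl⟩ | ⟨v, hv, rfl⟩) w (⟨y, hy, rfl⟩ | ⟨u, hu, rfl⟩)
      · obtain ⟨m, hm⟩ := hint x hx y hy
        refine ⟨2 * m, ?_⟩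
        simp only [map_zero, LinearMap.zero_apply, mul_zero, add_zero, hm]
        push_cast; ring
      · obtain ⟨m, hm⟩ := hint x hx u (hRL hu)
        refine ⟨m, ?_⟩
        simp only [map_smul, LinearMap.smul_apply, map_zero, LinearMap.zero_apply,
          smul_eq_mul, hm, smul_zero, mul_zero]
        ring
      · obtain ⟨m, hm⟩ := hint v (hRL hv) y hy
        refine ⟨m, ?_⟩
        simp only [map_smul, LinearMap.smul_apply, map_zero, smul_eq_mul, hm, mul_zero]
        ring
      · obtain ⟨m, hm⟩ := hint v (hRL hv) u (hRL hu)
        refine ⟨m, ?_⟩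
        simp only [map_smul, LinearMap.smul_apply, smul_eq_mul, hm]
        ring
    -- pairing integrality on the span
    have hpair : ∀ z ∈ Submodule.span ℤ S, ∀ w ∈ Submodule.span ℤ S,
        ∃ m : ℤ, 2 * B z.1 w.1 + 2 * B z.2 w.2 = m := by
      intro z hz w hw
      induction hz, hw using Submodule.span_induction₂ with
      | mem_mem x y hx hy => exact hgen x hx y hy
      | zero_left y hy => exact ⟨0, by simp⟩
      | zero_right x hx => exact ⟨0, by simp⟩
      | add_left x y z hx hy hz h1 h2 =>
        obtain ⟨m1, h1⟩ := h1; obtain ⟨m2, h2⟩ := h2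
        refine ⟨m1 + m2, ?_⟩
        simp only [Prod.fst_add, Prod.snd_add, map_add, LinearMap.add_apply]
        push_cast
        linarith [h1, h2]
      | add_right x y z hx hy hz h1 h2 =>
        obtain ⟨m1, h1⟩ := h1; obtain ⟨m2, h2⟩ := h2
        refine ⟨m1 + m2, ?_⟩
        simp only [Prod.fst_add, Prod.snd_add, map_add]
        push_cast
        linarith [h1, h2]
      | smul_left c x y hx hy h =>
        obtain ⟨m, h⟩ := h
        refine ⟨c * m, ?_⟩
        rw [← Int.cast_smul_eq_zsmul ℚ c x]
        simp only [Prod.smul_fst, Prod.smul_snd, map_smul, LinearMap.smul_apply, smul_eq_mul]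
        push_cast
        linear_combination (c : ℚ) * h
      | smul_right c x y hx hy h =>
        obtain ⟨m, h⟩ := h
        refine ⟨c * m, ?_⟩
        rw [← Int.cast_smul_eq_zsmul ℚ c y]
        simp only [Prod.smul_fst, Prod.smul_snd, map_smul, smul_eq_mul]
        push_cast
        linear_combination (c : ℚ) * h
    intro z hz
    induction hz using Submodule.span_induction with
    | mem x hx =>
      rcases hx with ⟨x, hx, rfl⟩ | ⟨v, hv, rfl⟩
      · obtain ⟨n, hn⟩ := heven x hx
        refine ⟨2 * n, ?_⟩
        simp only [map_zero, LinearMap.zero_apply, mul_zero, add_zero, hn]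
        push_cast; ring
      · obtain ⟨n, hn⟩ := heven v (hRL hv)
        refine ⟨n, ?_⟩
        simp only [map_smul, LinearMap.smul_apply, smul_eq_mul, hn]
        ring
    | zero => exact ⟨0, by simp⟩
    | add x y hx hy h1 h2 =>
      obtain ⟨n1, h1⟩ := h1; obtain ⟨n2, h2⟩ := h2
      obtain ⟨m, hm⟩ := hpair x hx y hy
      refine ⟨n1 + n2 + m, ?_⟩
      simp only [Prod.fst_add, Prod.snd_add, map_add, LinearMap.add_apply]
      rw [hsymm y.1 x.1, hsymm y.2 x.2]
      push_cast
      linarith [h1, h2, hm]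
    | smul c x hx h =>
      obtain ⟨n, hn⟩ := h
      refine ⟨c ^ 2 * n, ?_⟩
      rw [← Int.cast_smul_eq_zsmul ℚ c x]
      simp only [Prod.smul_fst, Prod.smul_snd, map_smul, LinearMap.smul_apply, smul_eq_mul]
      push_cast
      linear_combination (c : ℚ) ^ 2 * hn
  · intro v hv hvv
    simp only [map_smul, LinearMap.smul_apply, smul_eq_mul, hvv]
    ring
end

section
/- Let X be a complex K3 surface with a fixed-point-free involution ε and quotient Enriques surface Y = X/ε, with quotient map π : X → Y. Let S_{X+} and S_{X-} be the (+1)- and (-1)-eigenlattices of ε acting on the Néron–Severi lattice S_X. If a root r̃ of S_X is written r̃ = v_L + v_R with v_L ∈ S_{X+} ⊗ ℚ, v_R ∈ S_{X-} ⊗ ℚ, and the hyperplane r̃^⊥ meets the positive cone of S_{X+} (i.e. ⟨v_L, v_L⟩ < 0), and r̃ ∉ S_{X+}, then ⟨v_L, v_L⟩ = -1 and ⟨r̃, r̃^ε⟩ = 0. -/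
/-- lattice-theoretic formulation.  Let `S = S_X` be the Néron–Severi
lattice of the K3 cover of an Enriques surface, an even lattice with an involutive
isometry `ε` such that the invariant part `S₊ = π^*(S_Y(2))` has all squares divisible
by 4 and the anti-invariant part `S₋` is negative definite.  If `r̃ ∈ S` is a root
(`⟨r̃,r̃⟩ = -2`) with `r̃ ∉ S₊`, written `r̃ = v_L + v_R` with `v_L = (r̃ + r̃^ε)/2`,
`v_R = (r̃ - r̃^ε)/2`, and `⟨v_L, v_L⟩ < 0` (the hyperplane `r̃^⊥` meets the positive
cone of `S₊`), then `⟨v_L, v_L⟩ = -1` and `⟨r̃, r̃^ε⟩ = 0`. -/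
theorem statement18 {V : Type} [AddCommGroup V] [Module ℚ V]
    (B : V →ₗ[ℚ] V →ₗ[ℚ] ℚ) (hsymm : ∀ x y : V, B x y = B y x)
    (S : Submodule ℤ V)
    (hint : ∀ v ∈ S, ∀ w ∈ S, ∃ m : ℤ, B v w = m)
    (heven : ∀ v ∈ S, ∃ n : ℤ, B v v = 2 * n)
    (ε : V ≃ₗ[ℚ] V) (hinv : ∀ x : V, ε (ε x) = x)
    (hiso : ∀ x y : V, B (ε x) (ε y) = B x y)
    (hS : ∀ x : V, x ∈ S ↔ ε x ∈ S)
    -- `S₊ ≅ S_Y(2)` is an even lattice with form multiplied by 2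
    (hplus : ∀ v ∈ S, ε v = v → ∃ n : ℤ, B v v = 4 * n)
    -- `S₋` is negative definite (π is étale, `S₋` contains no roots a fortiori)
    (hminus : ∀ v ∈ S, ε v = -v → v ≠ 0 → B v v < 0)
    (r : V) (hr : r ∈ S) (hrr : B r r = -2)
    (hnotplus : ε r ≠ r)
    (hvL : B ((2⁻¹ : ℚ) • (r + ε r)) ((2⁻¹ : ℚ) • (r + ε r)) < 0) :
    B ((2⁻¹ : ℚ) • (r + ε r)) ((2⁻¹ : ℚ) • (r + ε r)) = -1 ∧ B r (ε r) = 0 := by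
  have hεr : ε r ∈ S := (hS r).mp hr
  have hεrr : B (ε r) (ε r) = -2 := by rw [hiso]; exact hrr
  obtain ⟨m, hm⟩ := hint r hr (ε r) hεr
  have hm' : B (ε r) r = m := by rw [hsymm]; exact hm
  have hu : r + ε r ∈ S := S.add_mem hr hεr
  have hεu : ε (r + ε r) = r + ε r := by
    rw [map_add, hinv]; abel
  obtain ⟨n, hn⟩ := hplus _ hu hεu
  have hBu : B (r + ε r) (r + ε r) = 2 * m - 4 := by
    simp only [map_add, LinearMap.add_apply, hrr, hεrr, hm, hm']
    ring
  have hw : r - ε r ∈ S := S.sub_mem hr hεr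
  have hεw : ε (r - ε r) = -(r - ε r) := by rw [map_sub, hinv]; abel
  have hwne : r - ε r ≠ 0 := sub_ne_zero.mpr fun h => hnotplus h.symm
  have hBw : B (r - ε r) (r - ε r) = -4 - 2 * m := by
    simp only [map_sub, LinearMap.sub_apply, hrr, hεrr, hm, hm']
    ring
  have hneg : (-4 : ℚ) - 2 * m < 0 := hBw ▸ hminus _ hw hεw hwne
  have hscaled : B ((2⁻¹ : ℚ) • (r + ε r)) ((2⁻¹ : ℚ) • (r + ε r))
      = 2⁻¹ * (2⁻¹ * (2 * m - 4)) := by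
    simp only [map_smul, LinearMap.smul_apply, smul_eq_mul, hBu]
  have hlt : 2⁻¹ * (2⁻¹ * (2 * (m : ℚ) - 4)) < 0 := hscaled ▸ hvL
  have hmn : (2 : ℚ) * m - 4 = 4 * n := by rw [← hBu, hn]
  have hmn' : 2 * m - 4 = 4 * n := by exact_mod_cast hmn
  have h1 : (m : ℚ) < 2 := by nlinarith
  have h2 : (-2 : ℚ) < m := by nlinarith
  have h1' : m < 2 := by exact_mod_cast h1
  have h2' : -2 < m := by exact_mod_cast h2
  have hm0 : m = 0 := by omega
  subst hm0
  constructor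
  · rw [hscaled]; norm_num
  · rw [hm]; norm_num
end
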